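/- arXiv:1910.03692 — 3 statements merged into one kernel-verified Lean document; each statement's English description precedes it below -/
import Mathlib

section
/- Let I ⊆ ℝ be measurable, and let h_n, h, m_n, m : I → [0,+∞] be measurable functions such that h(x) ≤ liminf_{n→∞} h_n(x) for a.e. x ∈ I and m_n ⇀ m weakly in L¹(I). Then ∫_I h(x) m(x) dx ≤ liminf_{n→∞} ∫_I h_n(x) m_n(x) dx. -/
open MeasureTheory Filter Topology
open scoped ENNReal

private lemma le_iSup_min_nat (a : ℝ≥0∞) : a ≤ ⨆ M : ℕ, min a (M : ℝ≥0∞) := by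
  rcases eq_or_ne a ⊤ with rfl | ha
  · simp [ENNReal.iSup_natCast]
  · obtain ⟨M, hM⟩ := exists_nat_ge a.toReal
    have : a ≤ (M : ℝ≥0∞) := by
      rw [← ENNReal.ofReal_natCast]
      exact (ENNReal.le_ofReal_iff_toReal_le ha (by positivity)).2 hM
    calc a = min a (M : ℝ≥0∞) := (min_eq_left this).symm
      _ ≤ ⨆ M : ℕ, min a (M : ℝ≥0∞) := le_iSup (fun M : ℕ => min a (M : ℝ≥0∞)) M

/-- Lower semicontinuity of products (Lemma B.1): if `h ≤ liminf hₙ` a.e. on a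
measurable set `I ⊆ ℝ` and `mₙ ⇀ m` weakly in `L¹(I)` (i.e. tested against all
`L^∞` functions), then `∫_I h m ≤ liminf ∫_I hₙ mₙ`. -/
theorem lsc_product_weakL1
    (I : Set ℝ) (hI : MeasurableSet I)
    (h : ℝ → ℝ≥0∞) (hn : ℕ → ℝ → ℝ≥0∞)
    (m : ℝ → ℝ) (mn : ℕ → ℝ → ℝ)
    (hmeas : Measurable h) (hnmeas : ∀ n, Measurable (hn n))
    (hm_int : IntegrableOn m I) (hmn_int : ∀ n, IntegrableOn (mn n) I)
    (hm_nonneg : ∀ᵐ x ∂(volume.restrict I), 0 ≤ m x)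
    (hmn_nonneg : ∀ n, ∀ᵐ x ∂(volume.restrict I), 0 ≤ mn n x)
    (hliminf : ∀ᵐ x ∂(volume.restrict I),
      h x ≤ liminf (fun n => hn n x) atTop)
    (hweak : ∀ g : ℝ → ℝ, MemLp g ⊤ (volume.restrict I) →
      Tendsto (fun n => ∫ x, mn n x * g x ∂(volume.restrict I)) atTop
        (𝓝 (∫ x, m x * g x ∂(volume.restrict I)))) :
    ∫⁻ x, h x * ENNReal.ofReal (m x) ∂(volume.restrict I) ≤
      liminf (fun n => ∫⁻ x, hn n x * ENNReal.ofReal (mn n x) ∂(volume.restrict I))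
        atTop := by
  set μ := volume.restrict I with hμ
  set g : ℕ → ℝ → ℝ≥0∞ := fun k x => ⨅ i : ℕ, hn (i + k) x with hg
  set ψ : ℕ → ℝ → ℝ≥0∞ := fun k x => min (g k x) (k : ℝ≥0∞) with hψ
  have gmeas : ∀ k, Measurable (g k) := fun k => Measurable.iInf fun i => hnmeas _
  have ψmeas : ∀ k, Measurable (ψ k) := fun k => (gmeas k).min measurable_const
  have gmono : ∀ x, Monotone fun k => g k x := by
    intro x k k' hk
    refine le_iInf fun j => ?_
    have : (j + (k' - k)) + k = j + k' := by omega
    exact iInf_le_of_le (j + (k' - k)) (le_of_eq (by rw [this]))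
  have ψmono : ∀ x, Monotone fun k => ψ k x := fun x k k' hk =>
    min_le_min (gmono x hk) (by exact_mod_cast Nat.cast_le.2 hk)
  have ψle_g : ∀ k x, ψ k x ≤ g k x := fun k x => min_le_left _ _
  have ψle : ∀ k x, ψ k x ≤ (k : ℝ≥0∞) := fun k x => min_le_right _ _
  have hliminf_le : ∀ x, liminf (fun n => hn n x) atTop ≤ ⨆ k, ψ k x := by
    intro x
    rw [liminf_eq_iSup_iInf_of_nat']
    refine iSup_le fun k0 => ?_
    calc g k0 x ≤ ⨆ M : ℕ, min (g k0 x) (M : ℝ≥0∞) := le_iSup_min_nat _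
      _ ≤ ⨆ k, ψ k x := by
          refine iSup_le fun M => ?_
          refine le_trans ?_ (le_iSup (fun k => ψ k x) (max k0 M))
          exact min_le_min (gmono x (le_max_left _ _))
            (by exact_mod_cast Nat.cast_le.2 (le_max_right k0 M))
  -- truncated test functions
  set f : ℕ → ℝ → ℝ := fun k x => (ψ k x).toReal with hf
  have fmeas : ∀ k, Measurable (f k) := fun k => (ψmeas k).ennreal_toReal
  have fbdd : ∀ k x, ‖f k x‖ ≤ (k : ℝ) := by
    intro k x
    rw [Real.norm_of_nonneg ENNReal.toReal_nonneg]
    have := ψle k x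
    exact_mod_cast ENNReal.toReal_mono (by simp) this
  have fmem : ∀ k, MemLp (f k) ⊤ μ := fun k =>
    memLp_top_of_bound (fmeas k).aestronglyMeasurable (k : ℝ)
      (Eventually.of_forall (fbdd k))
  have ψne : ∀ k x, ψ k x ≠ ⊤ := fun k x => ((ψle k x).trans_lt (ENNReal.natCast_lt_top k)).ne
  -- key identity
  have key : ∀ (k : ℕ) (ρ : ℝ → ℝ), IntegrableOn ρ I → (∀ᵐ x ∂μ, 0 ≤ ρ x) →
      ENNReal.ofReal (∫ x, ρ x * f k x ∂μ) = ∫⁻ x, ψ k x * ENNReal.ofReal (ρ x) ∂μ := by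
    intro k ρ hint hpos
    have hint' : Integrable (fun x => ρ x * f k x) μ := by
      have : Integrable (fun x => f k x * ρ x) μ :=
        hint.bdd_mul (fmeas k).aestronglyMeasurable (Eventually.of_forall (fbdd k))
      simpa [mul_comm] using this
    rw [MeasureTheory.ofReal_integral_eq_lintegral_ofReal hint'
      (hpos.mono fun x hx => mul_nonneg hx ENNReal.toReal_nonneg)]
    refine lintegral_congr_ae (hpos.mono fun x hx => ?_)
    show ENNReal.ofReal (ρ x * f k x) = ψ k x * ENNReal.ofReal (ρ x)
    rw [ENNReal.ofReal_mul hx, hf, ENNReal.ofReal_toReal (ψne k x), mul_comm]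
  -- each truncation level bounds the liminf
  have step1 : ∀ k, ∫⁻ x, ψ k x * ENNReal.ofReal (m x) ∂μ ≤
      liminf (fun n => ∫⁻ x, hn n x * ENNReal.ofReal (mn n x) ∂μ) atTop := by
    intro k
    have h1 : Tendsto (fun n => ENNReal.ofReal (∫ x, mn n x * f k x ∂μ)) atTop
        (𝓝 (ENNReal.ofReal (∫ x, m x * f k x ∂μ))) :=
      (ENNReal.continuous_ofReal.tendsto _).comp (hweak (f k) (fmem k))
    rw [← key k m hm_int hm_nonneg, ← h1.liminf_eq]
    refine liminf_le_liminf ?_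
    filter_upwards [eventually_ge_atTop k] with n hkn
    rw [key k (mn n) (hmn_int n) (hmn_nonneg n)]
    refine lintegral_mono fun x => mul_le_mul_left ?_ _
    refine (ψle_g k x).trans ?_
    have : (n - k) + k = n := by omega
    exact iInf_le_of_le (n - k) (le_of_eq (by rw [this]))
  -- conclude via monotone convergence
  have hm_aemeas : AEMeasurable m μ := hm_int.aemeasurable
  calc ∫⁻ x, h x * ENNReal.ofReal (m x) ∂μ
      ≤ ∫⁻ x, (⨆ k, ψ k x) * ENNReal.ofReal (m x) ∂μ := by
        refine lintegral_mono_ae (hliminf.mono fun x hx => ?_)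
        exact mul_le_mul_left (hx.trans (hliminf_le x)) _
    _ = ∫⁻ x, ⨆ k, ψ k x * ENNReal.ofReal (m x) ∂μ := by
        refine lintegral_congr fun x => ?_
        rw [ENNReal.iSup_mul]
    _ = ⨆ k, ∫⁻ x, ψ k x * ENNReal.ofReal (m x) ∂μ := by
        refine lintegral_iSup' (fun k => ((ψmeas k).aemeasurable.mul
          (ENNReal.measurable_ofReal.comp_aemeasurable hm_aemeas))) ?_
        exact Eventually.of_forall fun x k k' hk => mul_le_mul_left (ψmono x hk) _
    _ ≤ liminf (fun n => ∫⁻ x, hn n x * ENNReal.ofReal (mn n x) ∂μ) atTop :=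
        iSup_le step1
end

section
/- Let X = Y* for a separable Banach space Y, let I = [a,b] ⊂ ℝ, let f : X → [0,+∞] be sequentially weak* lower semicontinuous, and let v_k : I → X satisfy: (i) there is C > 0 with ‖v_k(t) − v_k(s)‖_X ≤ C|t − s| for all t,s ∈ I and all k, and (ii) v_k(t) ⇀* v(t) in X for every t ∈ I. Then for every compact set K contained in {t ∈ I : f(v(t)) > 0} there exist c > 0 and k̄ ∈ ℕ such that f(v_k(t)) ≥ c for every k ≥ k̄ and every t ∈ K. -/
open Filter Topology
open scoped ENNReal

/-- Lemma B.2: `X = Y*` for a separable Banach space `Y`, `f : X → [0,+∞]`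
sequentially weak* lower semicontinuous, and `v_k : [a,b] → X` uniformly
Lipschitz and pointwise weak* convergent to `v`. Then on every compact subset
`K` of the positivity set `{t ∈ [a,b] : f(v(t)) > 0}` there are `c > 0` and
`k̄` with `f(v_k(t)) ≥ c` for all `k ≥ k̄` and `t ∈ K`. -/
theorem uniform_lower_bound_weakstar
    {Y : Type*} [NormedAddCommGroup Y] [NormedSpace ℝ Y] [CompleteSpace Y]
    [TopologicalSpace.SeparableSpace Y]
    (a b : ℝ) (hab : a ≤ b)
    (f : (Y →L[ℝ] ℝ) → ℝ≥0∞)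
    (hf : ∀ (w : ℕ → Y →L[ℝ] ℝ) (x : Y →L[ℝ] ℝ),
      (∀ y : Y, Tendsto (fun k => w k y) atTop (𝓝 (x y))) →
      f x ≤ liminf (fun k => f (w k)) atTop)
    (C : ℝ) (hC : 0 < C)
    (v : ℕ → ℝ → (Y →L[ℝ] ℝ)) (vlim : ℝ → (Y →L[ℝ] ℝ))
    (hlip : ∀ k, ∀ t ∈ Set.Icc a b, ∀ s ∈ Set.Icc a b,
      ‖v k t - v k s‖ ≤ C * |t - s|)
    (hconv : ∀ t ∈ Set.Icc a b, ∀ y : Y,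
      Tendsto (fun k => v k t y) atTop (𝓝 (vlim t y)))
    (K : Set ℝ) (hK : IsCompact K)
    (hKsub : K ⊆ {t ∈ Set.Icc a b | 0 < f (vlim t)}) :
    ∃ c : ℝ≥0∞, 0 < c ∧ ∃ N : ℕ, ∀ k ≥ N, ∀ t ∈ K, c ≤ f (v k t) := by
  by_contra h
  push_neg at h
  choose k hkge t htK hft using fun n : ℕ => h (n : ℝ≥0∞)⁻¹
    (ENNReal.inv_pos.2 (ENNReal.natCast_ne_top n)) n
  obtain ⟨t₀, ht₀K, φ, hφ, hφlim⟩ := hK.tendsto_subseq htK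
  have ht₀ := hKsub ht₀K
  have hw : ∀ y : Y, Tendsto (fun n => v (k (φ n)) (t (φ n)) y) atTop (𝓝 (vlim t₀ y)) := by
    intro y
    rw [tendsto_iff_norm_sub_tendsto_zero]
    have hkphi : Tendsto (fun n => k (φ n)) atTop atTop :=
      tendsto_atTop_mono (fun n => (hφ.le_apply).trans (hkge (φ n))) tendsto_id
    have h2 : Tendsto (fun n => ‖v (k (φ n)) t₀ y - vlim t₀ y‖) atTop (𝓝 0) := by
      have := (hconv t₀ ht₀.1 y)
      have : Tendsto (fun m => ‖v m t₀ y - vlim t₀ y‖) atTop (𝓝 0) := by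
        rw [← tendsto_iff_norm_sub_tendsto_zero]; exact this
      exact this.comp hkphi
    have h1 : Tendsto (fun n => C * |t (φ n) - t₀| * ‖y‖) atTop (𝓝 0) := by
      have : Tendsto (fun n => |t (φ n) - t₀|) atTop (𝓝 0) := by
        have := (hφlim.sub_const t₀).abs
        simpa using this
      simpa using (this.const_mul C).mul_const ‖y‖
    have hb : ∀ n, ‖v (k (φ n)) (t (φ n)) y - vlim t₀ y‖
        ≤ C * |t (φ n) - t₀| * ‖y‖ + ‖v (k (φ n)) t₀ y - vlim t₀ y‖ := by
      intro n
      have htri : ‖v (k (φ n)) (t (φ n)) y - vlim t₀ y‖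
          ≤ ‖v (k (φ n)) (t (φ n)) y - v (k (φ n)) t₀ y‖
            + ‖v (k (φ n)) t₀ y - vlim t₀ y‖ := norm_sub_le_norm_sub_add_norm_sub _ _ _
      refine htri.trans (add_le_add ?_ le_rfl)
      have : v (k (φ n)) (t (φ n)) y - v (k (φ n)) t₀ y
          = (v (k (φ n)) (t (φ n)) - v (k (φ n)) t₀) y := by simp
      rw [this]
      calc ‖(v (k (φ n)) (t (φ n)) - v (k (φ n)) t₀) y‖
          ≤ ‖v (k (φ n)) (t (φ n)) - v (k (φ n)) t₀‖ * ‖y‖ :=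
            ContinuousLinearMap.le_opNorm _ _
        _ ≤ C * |t (φ n) - t₀| * ‖y‖ := by
            gcongr
            exact hlip _ _ (hKsub (htK (φ n))).1 _ ht₀.1
    exact squeeze_zero (fun n => norm_nonneg _) hb (by simpa using h1.add h2)
  have hlb := hf (fun n => v (k (φ n)) (t (φ n))) (vlim t₀) hw
  have hle : ∀ n : ℕ, f (v (k (φ n)) (t (φ n))) ≤ (n : ℝ≥0∞)⁻¹ := by
    intro n
    refine (hft (φ n)).le.trans ?_
    exact ENNReal.inv_le_inv.2 (by exact_mod_cast hφ.le_apply)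
  have hlim0 : liminf (fun n : ℕ => f (v (k (φ n)) (t (φ n)))) atTop = 0 := by
    refine le_antisymm ?_ zero_le
    calc liminf (fun n : ℕ => f (v (k (φ n)) (t (φ n)))) atTop
        ≤ liminf (fun n : ℕ => ((n : ℝ≥0∞))⁻¹) atTop :=
          liminf_le_liminf (Eventually.of_forall hle)
      _ = 0 := (ENNReal.tendsto_inv_nat_nhds_zero).liminf_eq
  rw [hlim0] at hlb
  exact absurd (le_antisymm hlb zero_le) (ne_of_gt ht₀.2)
end

section
/- Let ℳ(t,q,t',q') be the vanishing-viscosity contact potential defined by ℳ = ℛ(z') + ℋ(z,p') + ℳ^{red}, where for t' > 0, ℳ^{red}(t,q,t',q') = 0 if −D_u E(t,q)=0, −D_z E(t,q) ∈ ∂ℛ(0), and −D_p E(t,q) ∈ ∂_π ℋ(z,0), and ℳ^{red} = +∞ otherwise; and for t' = 0, ℳ^{red}(t,q,0,q') = 𝒟_ν(q')·𝒟*_ν(t,q). Then along any absolutely continuous parameterized curve (t,q) : [0,S] → [0,T]×Q with ℳ(t,q,t',q') < ∞ a.e., the chain-rule inequality holds: −(d/ds)E(t(s),q(s)) + ∂_t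 E(t(s),q(s)) t'(s) = ⟨−D_q E(t(s),q(s)), q'(s)⟩ ≤ ℳ(t(s),q(s),t'(s),q'(s)) for a.e. s. -/
open MeasureTheory Filter
open scoped RealInnerProductSpace ENNReal Classical

/-- The viscous-norm functional `𝒟_ν(q')² = ν‖u'‖² + ‖z'‖² + ν‖p'‖²`. -/
noncomputable def vvD {U Z P : Type*} [NormedAddCommGroup U] [NormedAddCommGroup Z]
    [NormedAddCommGroup P] (ν : ℝ) (u' : U) (z' : Z) (p' : P) : ℝ :=
  Real.sqrt (ν * ‖u'‖ ^ 2 + ‖z'‖ ^ 2 + ν * ‖p'‖ ^ 2)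

/-- The dual functional
`𝒟*_ν(t,q)² = ν⁻¹‖−D_uE‖² + dist(−D_zE, ∂ℛ(0))² + ν⁻¹ dist(−D_pE, ∂_πℋ(z,0))²`,
written in terms of the (given) partial gradients `ξu, ξz, ξp` of the energy. -/
noncomputable def vvDstar {U Z P : Type*} [NormedAddCommGroup U] [InnerProductSpace ℝ U]
    [NormedAddCommGroup Z] [InnerProductSpace ℝ Z]
    [NormedAddCommGroup P] [InnerProductSpace ℝ P]
    (ν : ℝ) (R : Z → ℝ) (Hh : Z → P → ℝ) (z : Z) (ξu : U) (ξz : Z) (ξp : P) : ℝ :=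
  Real.sqrt (ν⁻¹ * ‖ξu‖ ^ 2
    + Metric.infDist (-ξz) {γ : Z | ∀ w, ⟪γ, w⟫ ≤ R w} ^ 2
    + ν⁻¹ * Metric.infDist (-ξp) {ρ : P | ∀ w, ⟪ρ, w⟫ ≤ Hh z w} ^ 2)

/-- The reduced vanishing-viscosity contact potential `ℳ^{red}`: for `t' > 0` it
is `0` on the set of (locally) stable states and `+∞` otherwise; for `t' = 0`
it equals `𝒟_ν(q')·𝒟*_ν(t,q)`. -/
noncomputable def vvMred {U Z P : Type*} [NormedAddCommGroup U] [InnerProductSpace ℝ U]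
    [NormedAddCommGroup Z] [InnerProductSpace ℝ Z]
    [NormedAddCommGroup P] [InnerProductSpace ℝ P]
    (ν : ℝ) (R : Z → ℝ) (Hh : Z → P → ℝ) (z : Z)
    (t' : ℝ) (u' : U) (z' : Z) (p' : P) (ξu : U) (ξz : Z) (ξp : P) : ℝ≥0∞ :=
  if 0 < t' then
    (if ξu = 0 ∧ (∀ w, ⟪-ξz, w⟫ ≤ R w) ∧ (∀ w, ⟪-ξp, w⟫ ≤ Hh z w) then 0 else ⊤)
  else ENNReal.ofReal (vvD ν u' z' p' * vvDstar ν R Hh z ξu ξz ξp)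

/-- The full vanishing-viscosity contact potential
`ℳ = ℛ(z') + ℋ(z,p') + ℳ^{red}`. -/
noncomputable def vvM {U Z P : Type*} [NormedAddCommGroup U] [InnerProductSpace ℝ U]
    [NormedAddCommGroup Z] [InnerProductSpace ℝ Z]
    [NormedAddCommGroup P] [InnerProductSpace ℝ P]
    (ν : ℝ) (R : Z → ℝ) (Hh : Z → P → ℝ) (z : Z)
    (t' : ℝ) (u' : U) (z' : Z) (p' : P) (ξu : U) (ξz : Z) (ξp : P) : ℝ≥0∞ :=
  ENNReal.ofReal (R z') + ENNReal.ofReal (Hh z p')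
    + vvMred ν R Hh z t' u' z' p' ξu ξz ξp

lemma infDist_inner_bound {Z : Type*} [NormedAddCommGroup Z] [InnerProductSpace ℝ Z]
    (R : Z → ℝ) (hRnn : ∀ w, 0 ≤ R w) (x w : Z) :
    ⟪x, w⟫ ≤ Metric.infDist x {γ : Z | ∀ v, ⟪γ, v⟫ ≤ R v} * ‖w‖ + R w := by
  set K : Set Z := {γ : Z | ∀ v, ⟪γ, v⟫ ≤ R v}
  have hK : K.Nonempty := ⟨0, fun v => by simpa using hRnn v⟩
  refine le_of_forall_pos_le_add (fun ε hε => ?_)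
  rcases eq_or_ne w 0 with rfl | hw
  · have h0 : (0:ℝ) ≤ Metric.infDist x K * ‖(0:Z)‖ + R 0 := by
      have := hRnn (0:Z)
      have := Metric.infDist_nonneg (x := x) (s := K)
      positivity
    simpa using (lt_of_le_of_lt h0 (lt_add_of_pos_right _ hε)).le
  · have hwn : (0:ℝ) < ‖w‖ := norm_pos_iff.mpr hw
    obtain ⟨γ, hγK, hγd⟩ := (Metric.infDist_lt_iff hK).mp
      (lt_add_of_pos_right (Metric.infDist x K) (div_pos hε hwn))
    have h1 : ⟪x, w⟫ = ⟪x - γ, w⟫ + ⟪γ, w⟫ := by rw [inner_sub_left]; ring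
    have h2 : ⟪x - γ, w⟫ ≤ ‖x - γ‖ * ‖w‖ := real_inner_le_norm _ _
    have h3 : ‖x - γ‖ * ‖w‖ < (Metric.infDist x K + ε / ‖w‖) * ‖w‖ := by
      apply mul_lt_mul_of_pos_right _ hwn
      simpa [dist_eq_norm] using hγd
    have h4 : (Metric.infDist x K + ε / ‖w‖) * ‖w‖
        = Metric.infDist x K * ‖w‖ + ε := by field_simp
    have := hγK w
    calc ⟪x, w⟫ = ⟪x - γ, w⟫ + ⟪γ, w⟫ := h1
      _ ≤ ‖x - γ‖ * ‖w‖ + R w := add_le_add h2 this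
      _ ≤ Metric.infDist x K * ‖w‖ + ε + R w := by nlinarith
      _ = Metric.infDist x K * ‖w‖ + R w + ε := by ring

lemma cauchy_schwarz_three (a1 a2 a3 b1 b2 b3 : ℝ)
    (ha1 : 0 ≤ a1) (ha2 : 0 ≤ a2) (ha3 : 0 ≤ a3)
    (hb1 : 0 ≤ b1) (hb2 : 0 ≤ b2) (hb3 : 0 ≤ b3) :
    a1 * b1 + a2 * b2 + a3 * b3
      ≤ Real.sqrt (a1 ^ 2 + a2 ^ 2 + a3 ^ 2) * Real.sqrt (b1 ^ 2 + b2 ^ 2 + b3 ^ 2) := by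
  rw [← Real.sqrt_mul (by positivity)]
  have hnn : 0 ≤ a1 * b1 + a2 * b2 + a3 * b3 := by positivity
  rw [show a1 * b1 + a2 * b2 + a3 * b3
      = Real.sqrt ((a1 * b1 + a2 * b2 + a3 * b3) ^ 2) from (Real.sqrt_sq hnn).symm]
  apply Real.sqrt_le_sqrt
  nlinarith [sq_nonneg (a1 * b2 - a2 * b1), sq_nonneg (a1 * b3 - a3 * b1),
    sq_nonneg (a2 * b3 - a3 * b2)]

/-- Chain-rule inequality for the vanishing-viscosity contact potential
(Lemma 6.4 of the paper, abstract Hilbert-space version with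
`Q = U × Z × P` standing for `H¹ × H^m × L²`): along any absolutely continuous
parameterized curve `(𝗍,𝗊)` with `ℳ(𝗍,𝗊,𝗍',𝗊') < ∞` a.e., one has (a.e. in `s`)
`−(d/ds) E(𝗍(s),𝗊(s)) + ∂_t E(𝗍(s),𝗊(s)) 𝗍'(s) = ⟨−D_q E(𝗍(s),𝗊(s)), 𝗊'(s)⟩
 ≤ ℳ(𝗍(s),𝗊(s),𝗍'(s),𝗊'(s))`,
the first equality being the classical chain rule for the energy `E`
(hypothesis `hchain`). -/
theorem chain_rule_inequality_for_contact_potential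
    {U Z P : Type*}
    [NormedAddCommGroup U] [InnerProductSpace ℝ U] [CompleteSpace U]
    [NormedAddCommGroup Z] [InnerProductSpace ℝ Z] [CompleteSpace Z]
    [NormedAddCommGroup P] [InnerProductSpace ℝ P] [CompleteSpace P]
    (ν : ℝ) (hν : 0 < ν)
    (E : ℝ → U → Z → P → ℝ)
    (DuE : ℝ → U → Z → P → U) (DzE : ℝ → U → Z → P → Z)
    (DpE : ℝ → U → Z → P → P) (dtE : ℝ → U → Z → P → ℝ)
    (R : Z → ℝ) (Hh : Z → P → ℝ)
    (hRconv : ConvexOn ℝ Set.univ R) (hRnn : ∀ w, 0 ≤ R w)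
    (hRhom : ∀ c : ℝ, 0 ≤ c → ∀ w, R (c • w) = c * R w)
    (hHconv : ∀ z, ConvexOn ℝ Set.univ (Hh z)) (hHnn : ∀ z w, 0 ≤ Hh z w)
    (hHhom : ∀ z, ∀ c : ℝ, 0 ≤ c → ∀ w, Hh z (c • w) = c * Hh z w)
    (S : ℝ) (hS : 0 < S)
    (t : ℝ → ℝ) (u : ℝ → U) (z : ℝ → Z) (p : ℝ → P)
    (t' : ℝ → ℝ) (u' : ℝ → U) (z' : ℝ → Z) (p' : ℝ → P)
    (hderiv : ∀ᵐ s ∂(volume.restrict (Set.Ioo 0 S)),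
      HasDerivAt t (t' s) s ∧ HasDerivAt u (u' s) s ∧ HasDerivAt z (z' s) s ∧
        HasDerivAt p (p' s) s)
    (ht'nn : ∀ᵐ s ∂(volume.restrict (Set.Ioo 0 S)), 0 ≤ t' s)
    (hchain : ∀ᵐ s ∂(volume.restrict (Set.Ioo 0 S)),
      HasDerivAt (fun r => E (t r) (u r) (z r) (p r))
        (⟪DuE (t s) (u s) (z s) (p s), u' s⟫
          + ⟪DzE (t s) (u s) (z s) (p s), z' s⟫
          + ⟪DpE (t s) (u s) (z s) (p s), p' s⟫
          + dtE (t s) (u s) (z s) (p s) * t' s) s)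
    (hfin : ∀ᵐ s ∂(volume.restrict (Set.Ioo 0 S)),
      vvM ν R Hh (z s) (t' s) (u' s) (z' s) (p' s)
        (DuE (t s) (u s) (z s) (p s)) (DzE (t s) (u s) (z s) (p s))
        (DpE (t s) (u s) (z s) (p s)) < ⊤) :
    ∀ᵐ s ∂(volume.restrict (Set.Ioo 0 S)),
      (deriv (fun r => E (t r) (u r) (z r) (p r)) s
          = ⟪DuE (t s) (u s) (z s) (p s), u' s⟫
            + ⟪DzE (t s) (u s) (z s) (p s), z' s⟫
            + ⟪DpE (t s) (u s) (z s) (p s), p' s⟫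
            + dtE (t s) (u s) (z s) (p s) * t' s)
      ∧ ENNReal.ofReal (-(⟪DuE (t s) (u s) (z s) (p s), u' s⟫
            + ⟪DzE (t s) (u s) (z s) (p s), z' s⟫
            + ⟪DpE (t s) (u s) (z s) (p s), p' s⟫))
          ≤ vvM ν R Hh (z s) (t' s) (u' s) (z' s) (p' s)
              (DuE (t s) (u s) (z s) (p s)) (DzE (t s) (u s) (z s) (p s))
              (DpE (t s) (u s) (z s) (p s)) := by
  filter_upwards [hderiv, ht'nn, hchain, hfin] with s hd ht hc hf
  refine ⟨hc.deriv, ?_⟩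
  set ξu := DuE (t s) (u s) (z s) (p s) with hξu
  set ξz := DzE (t s) (u s) (z s) (p s) with hξz
  set ξp := DpE (t s) (u s) (z s) (p s) with hξp
  rcases ht.lt_or_eq with h0 | h0
  · -- t' s > 0
    have hstable : ξu = 0 ∧ (∀ w, ⟪-ξz, w⟫ ≤ R w) ∧ (∀ w, ⟪-ξp, w⟫ ≤ Hh (z s) w) := by
      by_contra hcon
      simp only [vvM, vvMred, if_pos h0, if_neg hcon] at hf
      simp at hf
    obtain ⟨hu0, hzs, hps⟩ := hstable
    have hreal : -(⟪ξu, u' s⟫ + ⟪ξz, z' s⟫ + ⟪ξp, p' s⟫) ≤ R (z' s) + Hh (z s) (p' s) := by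
      have h1 : ⟪ξu, u' s⟫ = 0 := by rw [hu0]; exact inner_zero_left _
      have h2 : ⟪-ξz, z' s⟫ ≤ R (z' s) := hzs _
      have h3 : ⟪-ξp, p' s⟫ ≤ Hh (z s) (p' s) := hps _
      rw [inner_neg_left] at h2 h3
      linarith
    calc ENNReal.ofReal (-(⟪ξu, u' s⟫ + ⟪ξz, z' s⟫ + ⟪ξp, p' s⟫))
        ≤ ENNReal.ofReal (R (z' s) + Hh (z s) (p' s)) := ENNReal.ofReal_le_ofReal hreal
      _ = ENNReal.ofReal (R (z' s)) + ENNReal.ofReal (Hh (z s) (p' s)) :=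
          ENNReal.ofReal_add (hRnn _) (hHnn _ _)
      _ ≤ vvM ν R Hh (z s) (t' s) (u' s) (z' s) (p' s) ξu ξz ξp := by
          simp [vvM, vvMred, h0, hu0, hzs, hps]
  · -- t' s = 0
    set dz := Metric.infDist (-ξz) {γ : Z | ∀ v, ⟪γ, v⟫ ≤ R v} with hdz
    set dp := Metric.infDist (-ξp) {ρ : P | ∀ v, ⟪ρ, v⟫ ≤ Hh (z s) v} with hdp
    have hdznn : 0 ≤ dz := Metric.infDist_nonneg
    have hdpnn : 0 ≤ dp := Metric.infDist_nonneg
    have hzb : ⟪-ξz, z' s⟫ ≤ dz * ‖z' s‖ + R (z' s) :=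
      infDist_inner_bound R hRnn (-ξz) (z' s)
    have hpb : ⟪-ξp, p' s⟫ ≤ dp * ‖p' s‖ + Hh (z s) (p' s) :=
      infDist_inner_bound (Hh (z s)) (hHnn (z s)) (-ξp) (p' s)
    have hub : ⟪-ξu, u' s⟫ ≤ ‖ξu‖ * ‖u' s‖ := by
      calc ⟪-ξu, u' s⟫ ≤ ‖-ξu‖ * ‖u' s‖ := real_inner_le_norm _ _
        _ = ‖ξu‖ * ‖u' s‖ := by rw [norm_neg]
    -- Cauchy-Schwarz step
    have hsν : Real.sqrt ν⁻¹ * Real.sqrt ν = 1 := by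
      rw [← Real.sqrt_mul (by positivity), inv_mul_cancel₀ hν.ne', Real.sqrt_one]
    have hcs : ‖ξu‖ * ‖u' s‖ + dz * ‖z' s‖ + dp * ‖p' s‖
        ≤ vvDstar ν R Hh (z s) ξu ξz ξp * vvD ν (u' s) (z' s) (p' s) := by
      have key := cauchy_schwarz_three (Real.sqrt ν⁻¹ * ‖ξu‖) dz (Real.sqrt ν⁻¹ * dp)
        (Real.sqrt ν * ‖u' s‖) ‖z' s‖ (Real.sqrt ν * ‖p' s‖)
        (by positivity) hdznn (by positivity) (by positivity) (norm_nonneg _)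
        (by positivity)
      have e1 : Real.sqrt ν⁻¹ * ‖ξu‖ * (Real.sqrt ν * ‖u' s‖) = ‖ξu‖ * ‖u' s‖ := by
        rw [show Real.sqrt ν⁻¹ * ‖ξu‖ * (Real.sqrt ν * ‖u' s‖)
            = (Real.sqrt ν⁻¹ * Real.sqrt ν) * (‖ξu‖ * ‖u' s‖) by ring, hsν, one_mul]
      have e3 : Real.sqrt ν⁻¹ * dp * (Real.sqrt ν * ‖p' s‖) = dp * ‖p' s‖ := by
        rw [show Real.sqrt ν⁻¹ * dp * (Real.sqrt ν * ‖p' s‖)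
            = (Real.sqrt ν⁻¹ * Real.sqrt ν) * (dp * ‖p' s‖) by ring, hsν, one_mul]
      have sq1 : (Real.sqrt ν⁻¹ * ‖ξu‖) ^ 2 = ν⁻¹ * ‖ξu‖ ^ 2 := by
        rw [mul_pow, Real.sq_sqrt (by positivity)]
      have sq3 : (Real.sqrt ν⁻¹ * dp) ^ 2 = ν⁻¹ * dp ^ 2 := by
        rw [mul_pow, Real.sq_sqrt (by positivity)]
      have sq1' : (Real.sqrt ν * ‖u' s‖) ^ 2 = ν * ‖u' s‖ ^ 2 := by
        rw [mul_pow, Real.sq_sqrt hν.le]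
      have sq3' : (Real.sqrt ν * ‖p' s‖) ^ 2 = ν * ‖p' s‖ ^ 2 := by
        rw [mul_pow, Real.sq_sqrt hν.le]
      rw [e1, e3, sq1, sq3, sq1', sq3'] at key
      simpa [vvD, vvDstar, hdz, hdp] using key
    have hreal : -(⟪ξu, u' s⟫ + ⟪ξz, z' s⟫ + ⟪ξp, p' s⟫)
        ≤ R (z' s) + Hh (z s) (p' s)
          + vvD ν (u' s) (z' s) (p' s) * vvDstar ν R Hh (z s) ξu ξz ξp := by
      rw [inner_neg_left] at hub hzb hpb
      nlinarith [hcs]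
    have hDnn : 0 ≤ vvD ν (u' s) (z' s) (p' s) * vvDstar ν R Hh (z s) ξu ξz ξp := by
      have : 0 ≤ vvD ν (u' s) (z' s) (p' s) := Real.sqrt_nonneg _
      have : 0 ≤ vvDstar ν R Hh (z s) ξu ξz ξp := Real.sqrt_nonneg _
      positivity
    calc ENNReal.ofReal (-(⟪ξu, u' s⟫ + ⟪ξz, z' s⟫ + ⟪ξp, p' s⟫))
        ≤ ENNReal.ofReal (R (z' s) + Hh (z s) (p' s)
            + vvD ν (u' s) (z' s) (p' s) * vvDstar ν R Hh (z s) ξu ξz ξp) :=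
          ENNReal.ofReal_le_ofReal hreal
      _ = ENNReal.ofReal (R (z' s)) + ENNReal.ofReal (Hh (z s) (p' s))
            + ENNReal.ofReal (vvD ν (u' s) (z' s) (p' s) * vvDstar ν R Hh (z s) ξu ξz ξp) := by
          rw [ENNReal.ofReal_add (add_nonneg (hRnn _) (hHnn _ _)) hDnn,
            ENNReal.ofReal_add (hRnn _) (hHnn _ _)]
      _ ≤ vvM ν R Hh (z s) (t' s) (u' s) (z' s) (p' s) ξu ξz ξp := by
          simp [vvM, vvMred, ← h0]
end
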